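/- Let L be a labelled transition system over an alphabet Σ and let P be any state of L. Then the set availTraces(P) of availability traces of P is a member of the Availability Traces Model: it is nonempty, prefix-closed, and satisfies healthiness conditions (2)–(4). -/

import Mathlib

/-- An availability action over the alphabet `E`: `Sum.inl a` is an ordinary event `a ∈ Σ`,
and `Sum.inr a` is the offer `◎a` of the event `a ∈ Σ`. -/
abbrev Act (E : Type*) := E ⊕ E

variable {E : Type*}

/-- A set `T` of availability traces is healthy (a member of the Availability Traces Model):
(1) nonempty and prefix-closed; (2) offers can be duplicated or removed; (3) an offered
event can be performed; (4) a performed event can first be offered. -/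
def Healthy (T : Set (List (Act E))) : Prop :=
  T.Nonempty ∧
  (∀ s t : List (Act E), s ++ t ∈ T → s ∈ T) ∧
  (∀ (tr : List (Act E)) (a : E) (tr' : List (Act E)),
    tr ++ [Sum.inr a] ++ tr' ∈ T →
      tr ++ [Sum.inr a, Sum.inr a] ++ tr' ∈ T ∧ tr ++ tr' ∈ T) ∧
  (∀ (tr : List (Act E)) (a : E), tr ++ [Sum.inr a] ∈ T → tr ++ [Sum.inl a] ∈ T) ∧
  (∀ (tr : List (Act E)) (a : E) (tr' : List (Act E)),
    tr ++ [Sum.inl a] ++ tr' ∈ T → tr ++ [Sum.inr a, Sum.inl a] ++ tr' ∈ T)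

/-- `HasTrace step P tr` holds if `tr` is an availability trace of the state `P` of the LTS
with transition relation `step`: `tr` is the sequence of non-τ labels of some finite sequence
of consecutive derived transitions starting at `P`, where the derived transitions are the
ordinary transitions (labelled by `none` for τ, or `some a` for an event `a`), together with
self-loops `P ⟶◎a P` whenever `P` has an `a`-transition. -/
inductive HasTrace {S : Type*} (step : S → Option E → S → Prop) : S → List (Act E) → Prop
  | nil (P : S) : HasTrace step P []
  | tau {P Q : S} {tr} : step P none Q → HasTrace step Q tr → HasTrace step P tr
  | ev {P Q : S} {a : E} {tr} : step P (some a) Q → HasTrace step Q tr →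
      HasTrace step P (Sum.inl a :: tr)
  | offer {P : S} {a : E} {tr} : (∃ Q, step P (some a) Q) → HasTrace step P tr →
      HasTrace step P (Sum.inr a :: tr)

/-- The set of availability traces of a state `P`. -/
def availTraces {S : Type*} (step : S → Option E → S → Prop) (P : S) : Set (List (Act E)) :=
  {tr | HasTrace step P tr}

section Aux
variable {E S : Type*} {step : S → Option E → S → Prop}

lemma hasTrace_prefix {P tr} (h : HasTrace step P tr) :
    ∀ s t : List (Act E), tr = s ++ t → HasTrace step P s := by
  induction h with
  | nil P => intro s t h; rw [List.nil_eq, List.append_eq_nil_iff] at h; rw [h.1]; exact .nil P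
  | tau hst _ ih => intro s t h; exact .tau hst (ih s t h)
  | ev hst _ ih =>
      intro s t h
      cases s with
      | nil => exact .nil _
      | cons x s =>
          simp only [List.cons_append, List.cons.injEq] at h
          obtain ⟨rfl, h⟩ := h; exact .ev hst (ih s t h)
  | offer hex _ ih =>
      intro s t h
      cases s with
      | nil => exact .nil _
      | cons x s =>
          simp only [List.cons_append, List.cons.injEq] at h
          obtain ⟨rfl, h⟩ := h; exact .offer hex (ih s t h)

lemma hasTrace_dup {P tr} (h : HasTrace step P tr) :
    ∀ (s : List (Act E)) (a : E) t, tr = s ++ Sum.inr a :: t →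
      HasTrace step P (s ++ Sum.inr a :: Sum.inr a :: t) := by
  induction h with
  | nil P => intro s a t h; exact absurd h.symm (List.append_ne_nil_of_right_ne_nil _ (by simp))
  | tau hst _ ih => intro s a t h; exact .tau hst (ih s a t h)
  | ev hst _ ih =>
      intro s a t h
      cases s with
      | nil => simp at h
      | cons x s =>
          simp only [List.cons_append, List.cons.injEq] at h
          obtain ⟨rfl, h⟩ := h; exact .ev hst (ih s a t h)
  | offer hex htr ih =>
      intro s a t h
      cases s with
      | nil =>
          simp only [List.nil_append, List.cons.injEq] at h
          obtain ⟨he, rfl⟩ := h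
          obtain rfl := Sum.inr.inj he
          exact .offer hex (.offer hex htr)
      | cons x s =>
          simp only [List.cons_append, List.cons.injEq] at h
          obtain ⟨rfl, h⟩ := h; exact .offer hex (ih s a t h)

lemma hasTrace_drop {P tr} (h : HasTrace step P tr) :
    ∀ (s : List (Act E)) (a : E) t, tr = s ++ Sum.inr a :: t → HasTrace step P (s ++ t) := by
  induction h with
  | nil P => intro s a t h; exact absurd h.symm (List.append_ne_nil_of_right_ne_nil _ (by simp))
  | tau hst _ ih => intro s a t h; exact .tau hst (ih s a t h)
  | ev hst _ ih =>
      intro s a t h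
      cases s with
      | nil => simp at h
      | cons x s =>
          simp only [List.cons_append, List.cons.injEq] at h
          obtain ⟨rfl, h⟩ := h; exact .ev hst (ih s a t h)
  | offer hex htr ih =>
      intro s a t h
      cases s with
      | nil =>
          simp only [List.nil_append, List.cons.injEq] at h
          obtain ⟨he, rfl⟩ := h
          exact htr
      | cons x s =>
          simp only [List.cons_append, List.cons.injEq] at h
          obtain ⟨rfl, h⟩ := h; exact .offer hex (ih s a t h)

lemma hasTrace_perform {P tr} (h : HasTrace step P tr) :
    ∀ (s : List (Act E)) (a : E), tr = s ++ [Sum.inr a] →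
      HasTrace step P (s ++ [Sum.inl a]) := by
  induction h with
  | nil P => intro s a h; exact absurd h.symm (List.append_ne_nil_of_right_ne_nil _ (by simp))
  | tau hst _ ih => intro s a h; exact .tau hst (ih s a h)
  | ev hst _ ih =>
      intro s a h
      cases s with
      | nil => simp at h
      | cons x s =>
          simp only [List.cons_append, List.cons.injEq] at h
          obtain ⟨rfl, h⟩ := h; exact .ev hst (ih s a h)
  | offer hex htr ih =>
      intro s a h
      cases s with
      | nil =>
          simp only [List.nil_append, List.cons.injEq] at h
          obtain ⟨he, rfl⟩ := h
          obtain rfl := Sum.inr.inj he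
          obtain ⟨Q, hQ⟩ := hex
          exact .ev hQ (.nil Q)
      | cons x s =>
          simp only [List.cons_append, List.cons.injEq] at h
          obtain ⟨rfl, h⟩ := h; exact .offer hex (ih s a h)

lemma hasTrace_preoffer {P tr} (h : HasTrace step P tr) :
    ∀ (s : List (Act E)) (a : E) t, tr = s ++ Sum.inl a :: t →
      HasTrace step P (s ++ Sum.inr a :: Sum.inl a :: t) := by
  induction h with
  | nil P => intro s a t h; exact absurd h.symm (List.append_ne_nil_of_right_ne_nil _ (by simp))
  | tau hst _ ih => intro s a t h; exact .tau hst (ih s a t h)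
  | ev hst htr ih =>
      intro s a t h
      cases s with
      | nil =>
          simp only [List.nil_append, List.cons.injEq] at h
          obtain ⟨he, rfl⟩ := h
          obtain rfl := Sum.inl.inj he
          exact .offer ⟨_, hst⟩ (.ev hst htr)
      | cons x s =>
          simp only [List.cons_append, List.cons.injEq] at h
          obtain ⟨rfl, h⟩ := h; exact .ev hst (ih s a t h)
  | offer hex _ ih =>
      intro s a t h
      cases s with
      | nil => simp at h
      | cons x s =>
          simp only [List.cons_append, List.cons.injEq] at h
          obtain ⟨rfl, h⟩ := h; exact .offer hex (ih s a t h)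

end Aux

/-- For any state `P` of any LTS, the set of availability traces of `P` is a member of the
Availability Traces Model. -/
theorem availTraces_healthy {E S : Type*} (step : S → Option E → S → Prop) (P : S) :
    Healthy (availTraces step P) := by
  refine ⟨⟨[], .nil P⟩, fun s t h => hasTrace_prefix h s t rfl,
    fun tr a tr' h => ⟨by simpa [availTraces] using hasTrace_dup h tr a tr' (by simp), by simpa [availTraces] using hasTrace_drop h tr a tr' (by simp)⟩,
    fun tr a h => hasTrace_perform h tr a rfl,
    fun tr a tr' h => by simpa [availTraces] using hasTrace_preoffer h tr a tr' (by simp)⟩
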